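/- Consider a K-player game in which player k's strategy set is a compact interval [a_k, b_k] ⊂ ℝ and player k's payoff u_k : ∏_j [a_j, b_j] → ℝ is continuous and has increasing differences in (s_k, s_j) for every j ≠ k (i.e., for s_k ≤ s_k', s_j ≤ s_j' and any fixed values of the remaining coordinates, u_k(s_k', s_j', ·) − u_k(s_k, s_j', ·) ≥ u_k(s_k', s_j, ·) − u_k(s_k, s_j, ·)). Then the set of pure-strategy Nash equilibria is nonempty and possesses a componentwise greatest element and a componentwise least element. (Proposition 1(i) for supermodular games with scalar strategies.) -/

import Mathlib

open Set

/-- `s` is a pure-strategy Nash equilibrium of the game with scalar strategy sets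
`[a k, b k]` and payoffs `u`. -/
def IsNE {K : ℕ} (a b : Fin K → ℝ) (u : Fin K → (Fin K → ℝ) → ℝ)
    (s : Fin K → ℝ) : Prop :=
  (∀ k, s k ∈ Set.Icc (a k) (b k)) ∧
    ∀ k : Fin K, ∀ x ∈ Set.Icc (a k) (b k), u k (Function.update s k x) ≤ u k s

namespace SupermodAux

variable {K : ℕ} (a b : Fin K → ℝ) (u : Fin K → (Fin K → ℝ) → ℝ)

/-- The set of maximizers of player `k`'s slice payoff given opponents' profile `s`. -/
def Argmax (s : Fin K → ℝ) (k : Fin K) : Set ℝ :=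
  {x ∈ Set.Icc (a k) (b k) |
    ∀ y ∈ Set.Icc (a k) (b k), u k (Function.update s k y) ≤ u k (Function.update s k x)}

lemma argmax_subset (s : Fin K → ℝ) (k : Fin K) :
    Argmax a b u s k ⊆ Set.Icc (a k) (b k) := fun _ hx => hx.1

lemma slice_cont (hcont : ∀ k, ContinuousOn (u k) (Set.univ.pi fun j => Set.Icc (a j) (b j)))
    (k : Fin K) (s : Fin K → ℝ) (hs : ∀ i, s i ∈ Set.Icc (a i) (b i)) :
    ContinuousOn (fun x => u k (Function.update s k x)) (Set.Icc (a k) (b k)) := by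
  apply (hcont k).comp
  · apply Continuous.continuousOn
    apply continuous_pi
    intro j
    by_cases h : j = k
    · subst h; simpa using continuous_id'
    · simpa [Function.update_of_ne h] using continuous_const
  · intro x hx
    rw [Set.mem_pi]
    intro j _
    by_cases h : j = k
    · subst h; simpa using hx
    · simpa [Function.update_of_ne h] using hs j

lemma argmax_compact_nonempty (hab : ∀ k, a k ≤ b k)
    (hcont : ∀ k, ContinuousOn (u k) (Set.univ.pi fun j => Set.Icc (a j) (b j)))
    (k : Fin K) (s : Fin K → ℝ) (hs : ∀ i, s i ∈ Set.Icc (a i) (b i)) :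
    IsCompact (Argmax a b u s k) ∧ (Argmax a b u s k).Nonempty := by
  have hg := slice_cont a b u hcont k s hs
  obtain ⟨x₀, hx₀I, hx₀⟩ := isCompact_Icc.exists_isMaxOn (Set.nonempty_Icc.2 (hab k)) hg
  have hAeq : Argmax a b u s k =
      Set.Icc (a k) (b k) ∩ (fun x => u k (Function.update s k x)) ⁻¹'
        Set.Ici (u k (Function.update s k x₀)) := by
    ext x
    constructor
    · rintro ⟨hxI, hx⟩
      exact ⟨hxI, hx x₀ hx₀I⟩
    · rintro ⟨hxI, hx⟩
      exact ⟨hxI, fun y hy => le_trans (hx₀ hy) hx⟩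
  have hclosed : IsClosed (Argmax a b u s k) := by
    rw [hAeq]
    exact hg.preimage_isClosed_of_isClosed isClosed_Icc isClosed_Ici
  refine ⟨isCompact_Icc.of_isClosed_subset hclosed (argmax_subset a b u s k), ⟨x₀, hx₀I, ?_⟩⟩
  intro y hy
  exact hx₀ hy

/-- Greatest best response. -/
noncomputable def BRtop (s : Fin K → ℝ) (k : Fin K) : ℝ := sSup (Argmax a b u s k)

/-- Least best response. -/
noncomputable def BRbot (s : Fin K → ℝ) (k : Fin K) : ℝ := sInf (Argmax a b u s k)

lemma BRtop_mem (hab : ∀ k, a k ≤ b k)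
    (hcont : ∀ k, ContinuousOn (u k) (Set.univ.pi fun j => Set.Icc (a j) (b j)))
    (k : Fin K) (s : Fin K → ℝ) (hs : ∀ i, s i ∈ Set.Icc (a i) (b i)) :
    BRtop a b u s k ∈ Argmax a b u s k := by
  obtain ⟨hc, hne⟩ := argmax_compact_nonempty a b u hab hcont k s hs
  exact hc.sSup_mem hne

lemma BRbot_mem (hab : ∀ k, a k ≤ b k)
    (hcont : ∀ k, ContinuousOn (u k) (Set.univ.pi fun j => Set.Icc (a j) (b j)))
    (k : Fin K) (s : Fin K → ℝ) (hs : ∀ i, s i ∈ Set.Icc (a i) (b i)) :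
    BRbot a b u s k ∈ Argmax a b u s k := by
  obtain ⟨hc, hne⟩ := argmax_compact_nonempty a b u hab hcont k s hs
  exact hc.sInf_mem hne

lemma multiID
    (hid : ∀ k j : Fin K, j ≠ k → ∀ s : Fin K → ℝ,
      (∀ i, s i ∈ Set.Icc (a i) (b i)) →
      ∀ x x' y y' : ℝ, a k ≤ x → x ≤ x' → x' ≤ b k → a j ≤ y → y ≤ y' → y' ≤ b j →
        u k (Function.update (Function.update s k x') j y) -
            u k (Function.update (Function.update s k x) j y) ≤
          u k (Function.update (Function.update s k x') j y') -
            u k (Function.update (Function.update s k x) j y'))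
    (k : Fin K) (s s' : Fin K → ℝ)
    (hs : ∀ i, s i ∈ Set.Icc (a i) (b i)) (hs' : ∀ i, s' i ∈ Set.Icc (a i) (b i))
    (hss' : ∀ j, s j ≤ s' j)
    (x x' : ℝ) (hx : a k ≤ x) (hxx' : x ≤ x') (hx' : x' ≤ b k) :
    u k (Function.update s k x') - u k (Function.update s k x) ≤
      u k (Function.update s' k x') - u k (Function.update s' k x) := by
  classical
  set m : Finset (Fin K) → Fin K → ℝ := fun F j => if j ∈ F then s' j else s j with hm
  have key : ∀ F : Finset (Fin K),
      u k (Function.update s k x') - u k (Function.update s k x) ≤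
        u k (Function.update (m F) k x') - u k (Function.update (m F) k x) := by
    intro F
    induction F using Finset.induction_on with
    | empty => simp [hm]
    | @insert j F hjF IH =>
      by_cases hjk : j = k
      · subst hjk
        have h1 : ∀ c : ℝ,
            Function.update (m (insert j F)) j c = Function.update (m F) j c := by
          intro c; funext i
          by_cases hij : i = j
          · subst hij; simp
          · simp [Function.update_of_ne hij, hm, Finset.mem_insert, hij]
        rw [h1 x', h1 x]; exact IH
      · have hmF : ∀ i, m F i ∈ Set.Icc (a i) (b i) := by
          intro i; by_cases h : i ∈ F <;> simp [hm, h, hs i, hs' i]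
        have hmFj : m F j = s j := by simp [hm, hjF]
        have hins : m (insert j F) = Function.update (m F) j (s' j) := by
          funext i
          by_cases hij : i = j
          · subst hij; simp [hm]
          · simp [hm, Function.update_of_ne hij, Finset.mem_insert, hij]
        have H := hid k j hjk (m F) hmF x x' (s j) (s' j) hx hxx' hx'
          (hs j).1 (hss' j) (hs' j).2
        have e1 : ∀ c : ℝ,
            Function.update (Function.update (m F) k c) j (s j) =
              Function.update (m F) k c := by
          intro c
          rw [Function.update_comm (Ne.symm hjk), ← hmFj, Function.update_eq_self]
        have e2 : ∀ c : ℝ,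
            Function.update (Function.update (m F) k c) j (s' j) =
              Function.update (m (insert j F)) k c := by
          intro c
          rw [Function.update_comm (Ne.symm hjk), hins]
        rw [e1 x', e1 x, e2 x', e2 x] at H
        exact IH.trans H
  have hmu : m Finset.univ = s' := by funext i; simp [hm]
  have := key Finset.univ
  rwa [hmu] at this

lemma BRtop_mono (hab : ∀ k, a k ≤ b k)
    (hcont : ∀ k, ContinuousOn (u k) (Set.univ.pi fun j => Set.Icc (a j) (b j)))
    (hid : ∀ k j : Fin K, j ≠ k → ∀ s : Fin K → ℝ,
      (∀ i, s i ∈ Set.Icc (a i) (b i)) →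
      ∀ x x' y y' : ℝ, a k ≤ x → x ≤ x' → x' ≤ b k → a j ≤ y → y ≤ y' → y' ≤ b j →
        u k (Function.update (Function.update s k x') j y) -
            u k (Function.update (Function.update s k x) j y) ≤
          u k (Function.update (Function.update s k x') j y') -
            u k (Function.update (Function.update s k x) j y'))
    (k : Fin K) (s s' : Fin K → ℝ)
    (hs : ∀ i, s i ∈ Set.Icc (a i) (b i)) (hs' : ∀ i, s' i ∈ Set.Icc (a i) (b i))
    (hss' : ∀ j, s j ≤ s' j) :
    BRtop a b u s k ≤ BRtop a b u s' k := by
  have hxA := BRtop_mem a b u hab hcont k s hs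
  have hx'A := BRtop_mem a b u hab hcont k s' hs'
  set x := BRtop a b u s k
  set x' := BRtop a b u s' k
  by_contra hcon
  push_neg at hcon
  have hID := multiID a b u hid k s s' hs hs' hss' x' x hx'A.1.1 hcon.le hxA.1.2
  have h1 : 0 ≤ u k (Function.update s k x) - u k (Function.update s k x') :=
    sub_nonneg.2 (hxA.2 x' hx'A.1)
  have h2 : u k (Function.update s' k x') ≤ u k (Function.update s' k x) := by linarith
  have hxA' : x ∈ Argmax a b u s' k :=
    ⟨hxA.1, fun y hy => (hx'A.2 y hy).trans h2⟩
  have : x ≤ x' :=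
    le_csSup (BddAbove.mono (argmax_subset a b u s' k) bddAbove_Icc) hxA'
  exact absurd this (not_le.2 hcon)

lemma BRbot_mono (hab : ∀ k, a k ≤ b k)
    (hcont : ∀ k, ContinuousOn (u k) (Set.univ.pi fun j => Set.Icc (a j) (b j)))
    (hid : ∀ k j : Fin K, j ≠ k → ∀ s : Fin K → ℝ,
      (∀ i, s i ∈ Set.Icc (a i) (b i)) →
      ∀ x x' y y' : ℝ, a k ≤ x → x ≤ x' → x' ≤ b k → a j ≤ y → y ≤ y' → y' ≤ b j →
        u k (Function.update (Function.update s k x') j y) -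
            u k (Function.update (Function.update s k x) j y) ≤
          u k (Function.update (Function.update s k x') j y') -
            u k (Function.update (Function.update s k x) j y'))
    (k : Fin K) (s s' : Fin K → ℝ)
    (hs : ∀ i, s i ∈ Set.Icc (a i) (b i)) (hs' : ∀ i, s' i ∈ Set.Icc (a i) (b i))
    (hss' : ∀ j, s j ≤ s' j) :
    BRbot a b u s k ≤ BRbot a b u s' k := by
  have hxA := BRbot_mem a b u hab hcont k s hs
  have hx'A := BRbot_mem a b u hab hcont k s' hs'
  set x := BRbot a b u s k
  set x' := BRbot a b u s' k
  by_contra hcon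
  push_neg at hcon
  have hID := multiID a b u hid k s s' hs hs' hss' x' x hx'A.1.1 hcon.le hxA.1.2
  have h1 : u k (Function.update s' k x) - u k (Function.update s' k x') ≤ 0 :=
    sub_nonpos.2 (hx'A.2 x hxA.1)
  have h2 : u k (Function.update s k x) ≤ u k (Function.update s k x') := by linarith
  have hx'As : x' ∈ Argmax a b u s k :=
    ⟨hx'A.1, fun y hy => (hxA.2 y hy).trans h2⟩
  have : x ≤ x' :=
    csInf_le (BddBelow.mono (argmax_subset a b u s k) bddBelow_Icc) hx'As
  exact absurd this (not_le.2 hcon)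

end SupermodAux

open SupermodAux in
/-- Proposition 1(i) for supermodular games with scalar strategies: with compact interval
strategy sets, continuous payoffs and increasing differences, the set of pure-strategy
Nash equilibria is nonempty and has componentwise least and greatest elements. -/
theorem supermodular_NE_least_greatest {K : ℕ} (hK : 1 ≤ K)
    (a b : Fin K → ℝ) (hab : ∀ k, a k ≤ b k)
    (u : Fin K → (Fin K → ℝ) → ℝ)
    (hcont : ∀ k, ContinuousOn (u k) (Set.univ.pi fun j => Set.Icc (a j) (b j)))
    (hid : ∀ k j : Fin K, j ≠ k → ∀ s : Fin K → ℝ,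
      (∀ i, s i ∈ Set.Icc (a i) (b i)) →
      ∀ x x' y y' : ℝ, a k ≤ x → x ≤ x' → x' ≤ b k → a j ≤ y → y ≤ y' → y' ≤ b j →
        u k (Function.update (Function.update s k x') j y) -
            u k (Function.update (Function.update s k x) j y) ≤
          u k (Function.update (Function.update s k x') j y') -
            u k (Function.update (Function.update s k x) j y')) :
    ∃ slo shi : Fin K → ℝ, IsNE a b u slo ∧ IsNE a b u shi ∧
      ∀ s : Fin K → ℝ, IsNE a b u s → (∀ k, slo k ≤ s k) ∧ (∀ k, s k ≤ shi k) := by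
  classical
  -- notation
  set T := BRtop a b u with hT
  set T' := BRbot a b u with hT'
  have hTmem : ∀ s, (∀ i, s i ∈ Set.Icc (a i) (b i)) → ∀ k, T s k ∈ Argmax a b u s k :=
    fun s hs k => BRtop_mem a b u hab hcont k s hs
  have hT'mem : ∀ s, (∀ i, s i ∈ Set.Icc (a i) (b i)) → ∀ k, T' s k ∈ Argmax a b u s k :=
    fun s hs k => BRbot_mem a b u hab hcont k s hs
  have hTmono := fun k s s' hs hs' hss' =>
    BRtop_mono a b u hab hcont hid k s s' hs hs' hss'
  have hT'mono := fun k s s' hs hs' hss' =>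
    BRbot_mono a b u hab hcont hid k s s' hs hs' hss'
  -- NE points are maximizers of own slice
  have hNE_argmax : ∀ s, IsNE a b u s → ∀ k, s k ∈ Argmax a b u s k := by
    intro s hs k
    refine ⟨hs.1 k, fun y hy => ?_⟩
    rw [Function.update_eq_self]
    exact hs.2 k y hy
  ----------------------------------------------------------------
  -- greatest equilibrium
  ----------------------------------------------------------------
  set P : Set (Fin K → ℝ) :=
    {s | (∀ i, s i ∈ Set.Icc (a i) (b i)) ∧ ∀ k, s k ≤ T s k} with hP
  have haP : a ∈ P := by
    refine ⟨fun i => ⟨le_refl _, hab i⟩, fun k => ?_⟩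
    exact (hTmem a (fun i => ⟨le_refl _, hab i⟩) k).1.1
  set shi : Fin K → ℝ := fun k => sSup ((fun s => s k) '' P) with hshi
  have hbddk : ∀ k : Fin K, BddAbove ((fun s => s k) '' P) := by
    intro k
    refine ⟨b k, ?_⟩
    rintro t ⟨s, hsP, rfl⟩
    exact (hsP.1 k).2
  have hnek : ∀ k : Fin K, ((fun s : Fin K → ℝ => s k) '' P).Nonempty :=
    fun k => ⟨a k, a, haP, rfl⟩
  have hPle : ∀ s ∈ P, ∀ k, s k ≤ shi k := by
    intro s hsP k
    exact le_csSup (hbddk k) ⟨s, hsP, rfl⟩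
  have hshifeas : ∀ i, shi i ∈ Set.Icc (a i) (b i) := by
    intro i
    constructor
    · exact le_csSup (hbddk i) ⟨a, haP, rfl⟩
    · refine csSup_le (hnek i) ?_
      rintro t ⟨s, hsP, rfl⟩
      exact (hsP.1 i).2
  have hshiP : shi ∈ P := by
    refine ⟨hshifeas, fun k => ?_⟩
    refine csSup_le (hnek k) ?_
    rintro t ⟨s, hsP, rfl⟩
    exact (hsP.2 k).trans (hTmono k s shi hsP.1 hshifeas (hPle s hsP))
  have hTshifeas : ∀ i, T shi i ∈ Set.Icc (a i) (b i) :=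
    fun i => (hTmem shi hshifeas i).1
  have hTshiP : T shi ∈ P := by
    refine ⟨hTshifeas, fun k => ?_⟩
    exact hTmono k shi (T shi) hshifeas hTshifeas hshiP.2
  have hfix : ∀ k, T shi k = shi k :=
    fun k => le_antisymm (hPle _ hTshiP k) (hshiP.2 k)
  have hshiNE : IsNE a b u shi := by
    refine ⟨hshifeas, fun k x hx => ?_⟩
    have hm := hTmem shi hshifeas k
    rw [hfix k] at hm
    have := hm.2 x hx
    rwa [Function.update_eq_self] at this
  have hNEinP : ∀ s, IsNE a b u s → s ∈ P := by
    intro s hs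
    refine ⟨hs.1, fun k => ?_⟩
    exact le_csSup (BddAbove.mono (argmax_subset a b u s k) bddAbove_Icc)
      (hNE_argmax s hs k)
  ----------------------------------------------------------------
  -- least equilibrium
  ----------------------------------------------------------------
  set Q : Set (Fin K → ℝ) :=
    {s | (∀ i, s i ∈ Set.Icc (a i) (b i)) ∧ ∀ k, T' s k ≤ s k} with hQ
  have hbQ : b ∈ Q := by
    refine ⟨fun i => ⟨hab i, le_refl _⟩, fun k => ?_⟩
    exact (hT'mem b (fun i => ⟨hab i, le_refl _⟩) k).1.2
  set slo : Fin K → ℝ := fun k => sInf ((fun s => s k) '' Q) with hslo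
  have hbddk' : ∀ k : Fin K, BddBelow ((fun s => s k) '' Q) := by
    intro k
    refine ⟨a k, ?_⟩
    rintro t ⟨s, hsQ, rfl⟩
    exact (hsQ.1 k).1
  have hnek' : ∀ k : Fin K, ((fun s : Fin K → ℝ => s k) '' Q).Nonempty :=
    fun k => ⟨b k, b, hbQ, rfl⟩
  have hQle : ∀ s ∈ Q, ∀ k, slo k ≤ s k := by
    intro s hsQ k
    exact csInf_le (hbddk' k) ⟨s, hsQ, rfl⟩
  have hslofeas : ∀ i, slo i ∈ Set.Icc (a i) (b i) := by
    intro i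
    constructor
    · refine le_csInf (hnek' i) ?_
      rintro t ⟨s, hsQ, rfl⟩
      exact (hsQ.1 i).1
    · exact csInf_le (hbddk' i) ⟨b, hbQ, rfl⟩
  have hsloQ : slo ∈ Q := by
    refine ⟨hslofeas, fun k => ?_⟩
    refine le_csInf (hnek' k) ?_
    rintro t ⟨s, hsQ, rfl⟩
    exact (hT'mono k slo s hslofeas hsQ.1 (hQle s hsQ)).trans (hsQ.2 k)
  have hT'slofeas : ∀ i, T' slo i ∈ Set.Icc (a i) (b i) :=
    fun i => (hT'mem slo hslofeas i).1
  have hT'sloQ : T' slo ∈ Q := by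
    refine ⟨hT'slofeas, fun k => ?_⟩
    exact hT'mono k (T' slo) slo hT'slofeas hslofeas hsloQ.2
  have hfix' : ∀ k, T' slo k = slo k :=
    fun k => le_antisymm (hsloQ.2 k) (hQle _ hT'sloQ k)
  have hsloNE : IsNE a b u slo := by
    refine ⟨hslofeas, fun k x hx => ?_⟩
    have hm := hT'mem slo hslofeas k
    rw [hfix' k] at hm
    have := hm.2 x hx
    rwa [Function.update_eq_self] at this
  have hNEinQ : ∀ s, IsNE a b u s → s ∈ Q := by
    intro s hs
    refine ⟨hs.1, fun k => ?_⟩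
    exact csInf_le (BddBelow.mono (argmax_subset a b u s k) bddBelow_Icc)
      (hNE_argmax s hs k)
  exact ⟨slo, shi, hsloNE, hshiNE,
    fun s hs => ⟨hQle s (hNEinQ s hs), hPle s (hNEinP s hs)⟩⟩
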